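/- For every integer n ≥ 2, the product ∏_{k=2}^{n} (k − 10/9)/(k − 1) is at least (8/9)·n^{−1/9}. -/

import Mathlib

-- key analytic inequality: x^{-1/9} ≤ (x-1)^{-1/9} * (x - 1/9)/x for x ≥ 2
lemma key13 (x : ℝ) (hx : 2 ≤ x) :
    x ^ (-(1:ℝ)/9) ≤ (x - 1) ^ (-(1:ℝ)/9) * ((x - 1/9) / x) := by
  have hx0 : (0:ℝ) < x := by linarith
  have hx1 : (0:ℝ) < x - 1 := by linarith
  have h19 : (0:ℝ) < x - 1/9 := by linarith
  -- Bernoulli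
  have hbern : 1 + (9:ℕ) * (-1/(9*x)) ≤ (1 + (-1/(9*x)))^(9:ℕ) := by
    apply one_add_mul_le_pow
    have h1 : (1:ℝ)/(9*x) ≤ 2 := by
      rw [div_le_iff₀ (by linarith : (0:ℝ) < 9*x)]; linarith
    rw [neg_div]; linarith
  have hb : x^(8:ℕ) * (x - 1) ≤ (x - 1/9)^(9:ℕ) := by
    have hx9 : (0:ℝ) < x^(9:ℕ) := pow_pos hx0 9
    have e1 : (x - 1/9)^(9:ℕ) = x^(9:ℕ) * (1 + (-1/(9*x)))^(9:ℕ) := by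
      rw [← mul_pow]; congr 1; field_simp; ring
    have e2 : x^(9:ℕ) * (1 + (9:ℕ) * (-1/(9*x))) = x^(8:ℕ) * (x - 1) := by
      field_simp; ring
    calc x^(8:ℕ) * (x-1) = x^(9:ℕ) * (1 + (9:ℕ) * (-1/(9*x))) := e2.symm
      _ ≤ x^(9:ℕ) * (1 + (-1/(9*x)))^(9:ℕ) := by
          exact mul_le_mul_of_nonneg_left hbern hx9.le
      _ = (x - 1/9)^(9:ℕ) := e1.symm
  have hmain : x ^ ((8:ℝ)/9) * (x-1) ^ ((1:ℝ)/9) ≤ x - 1/9 := by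
    have h := Real.rpow_le_rpow (by positivity) hb (by norm_num : (0:ℝ) ≤ 1/9)
    have hL : (x^(8:ℕ) * (x-1)) ^ ((1:ℝ)/9) = x ^ ((8:ℝ)/9) * (x-1) ^ ((1:ℝ)/9) := by
      rw [Real.mul_rpow (by positivity) hx1.le, ← Real.rpow_natCast x 8,
        ← Real.rpow_mul hx0.le]
      norm_num
    have hR : ((x - 1/9)^(9:ℕ)) ^ ((1:ℝ)/9) = x - 1/9 := by
      rw [← Real.rpow_natCast (x - 1/9) 9, ← Real.rpow_mul h19.le]
      norm_num
    rw [hL, hR] at h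
    exact h
  have ha : 0 < x ^ ((1:ℝ)/9) := Real.rpow_pos_of_pos hx0 _
  have hbp : 0 < (x-1) ^ ((1:ℝ)/9) := Real.rpow_pos_of_pos hx1 _
  rw [neg_div, Real.rpow_neg hx0.le, Real.rpow_neg hx1.le]
  have h2 : ((x-1)^((1:ℝ)/9))⁻¹ * ((x - 1/9)/x) = (x - 1/9) / ((x-1)^((1:ℝ)/9) * x) := by
    field_simp
  rw [h2, inv_eq_one_div, div_le_div_iff₀ ha (by positivity)]
  have hxx : x ^ ((1:ℝ)/9) * x ^ ((8:ℝ)/9) = x := by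
    rw [← Real.rpow_add hx0]
    norm_num
  calc 1 * ((x-1)^((1:ℝ)/9) * x) = x ^ ((1:ℝ)/9) * (x ^ ((8:ℝ)/9) * (x-1) ^ ((1:ℝ)/9)) := by
        rw [one_mul]
        conv_rhs => rw [← mul_assoc, hxx]
        exact mul_comm _ _
    _ ≤ x ^ ((1:ℝ)/9) * (x - 1/9) := by
        exact mul_le_mul_of_nonneg_left hmain ha.le
    _ = (x - 1/9) * x ^ ((1:ℝ)/9) := by ring

lemma aux13 (n : ℕ) (hn : 2 ≤ n) :
    (8 / 9 : ℝ) * ((n : ℝ) - 1) ^ (-(1 : ℝ) / 9) ≤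
      ∏ k ∈ Finset.Icc 2 n, (((k : ℝ) - 10 / 9) / ((k : ℝ) - 1)) := by
  induction n, hn using Nat.le_induction with
  | base => norm_num
  | succ n hn ih =>
      rw [Finset.prod_Icc_succ_top (by omega : 2 ≤ n + 1)]
      have hx : (2:ℝ) ≤ (n:ℝ) := by exact_mod_cast hn
      have hn0 : (0:ℝ) < n := by linarith
      have hratio : (0:ℝ) ≤ ((n:ℝ) - 1/9) / n := by
        apply div_nonneg (by linarith) hn0.le
      have hk := key13 (n:ℝ) hx
      push_cast
      rw [show ((n:ℝ)+1-10/9)/((n:ℝ)+1-1) = ((n:ℝ)-1/9)/(n:ℝ) from by ring,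
          show ((n:ℝ)+1-1) = (n:ℝ) from by ring]
      calc (8/9:ℝ) * (n:ℝ) ^ (-(1:ℝ)/9)
          ≤ (8/9:ℝ) * (((n:ℝ) - 1) ^ (-(1:ℝ)/9) * (((n:ℝ) - 1/9) / n)) := by
            apply mul_le_mul_of_nonneg_left hk (by norm_num)
        _ = ((8/9:ℝ) * ((n:ℝ) - 1) ^ (-(1:ℝ)/9)) * (((n:ℝ) - 1/9) / n) := by ring
        _ ≤ (∏ k ∈ Finset.Icc 2 n, (((k : ℝ) - 10 / 9) / ((k : ℝ) - 1))) * (((n:ℝ) - 1/9) / n) := by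
            exact mul_le_mul_of_nonneg_right ih hratio

theorem stmt_13 (n : ℕ) (hn : 2 ≤ n) :
    (8 / 9 : ℝ) * (n : ℝ) ^ (-(1 : ℝ) / 9) ≤
      ∏ k ∈ Finset.Icc 2 n, (((k : ℝ) - 10 / 9) / ((k : ℝ) - 1)) := by
  refine le_trans ?_ (aux13 n hn)
  have hx : (2:ℝ) ≤ (n:ℝ) := by exact_mod_cast hn
  have h1 : (0:ℝ) < (n:ℝ) - 1 := by linarith
  have h : ((n:ℝ)) ^ (-(1:ℝ)/9) ≤ ((n:ℝ) - 1) ^ (-(1:ℝ)/9) := by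
    rw [neg_div, Real.rpow_neg (by linarith), Real.rpow_neg h1.le]
    apply inv_anti₀ (Real.rpow_pos_of_pos h1 _)
    exact Real.rpow_le_rpow h1.le (by linarith) (by norm_num)
  exact mul_le_mul_of_nonneg_left h (by norm_num)
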